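/- arXiv:2512.07322 — 2 statements merged into one kernel-verified Lean document; each statement's English description precedes it below -/
import Mathlib

section
/- Under the hypotheses of the F-family, if in addition 1/6 ≤ b ≤ 1/4 and c ≥ 1/2, then ξ₄ − ξ₃ > z₂ − z₁. -/
/-- Auxiliary ordering lemma: if the quartic `5(x-ξ₁)(x-ξ₂)(x-ξ₃)(x-ξ₄)` (with ordered roots,
`ξ₁ ≤ 1/3`) is positive at `1/3` and negative at `p` and `q` with `1/3 < p < q`, then
`ξ₃ < p` and `q < ξ₄`, so the gap `ξ₄ - ξ₃` exceeds `q - p`. -/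
lemma gap_aux (ξ₁ ξ₂ ξ₃ ξ₄ p q : ℝ) (hξ12 : ξ₁ ≤ ξ₂) (hξ23 : ξ₂ ≤ ξ₃) (hξ34 : ξ₃ ≤ ξ₄)
    (hξ1 : ξ₁ ≤ 1/3) (hp13 : 1/3 < p) (hpq : p < q)
    (hr : 0 < 5*(1/3-ξ₁)*(1/3-ξ₂)*(1/3-ξ₃)*(1/3-ξ₄))
    (hp : 5*(p-ξ₁)*(p-ξ₂)*(p-ξ₃)*(p-ξ₄) < 0)
    (hq : 5*(q-ξ₁)*(q-ξ₂)*(q-ξ₃)*(q-ξ₄) < 0) :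
    q - p < ξ₄ - ξ₃ := by
  have h2 : ξ₂ < 1/3 := by
    by_contra h
    push_neg at h
    nlinarith [mul_nonneg (mul_nonneg (mul_nonneg
      (by linarith : (0:ℝ) ≤ 1/3 - ξ₁) (by linarith : (0:ℝ) ≤ ξ₂ - 1/3))
      (by linarith : (0:ℝ) ≤ ξ₃ - 1/3)) (by linarith : (0:ℝ) ≤ ξ₄ - 1/3)]
  have hp3 : ξ₃ < p := by
    by_contra h
    push_neg at h
    nlinarith [mul_nonneg (mul_nonneg (mul_nonneg
      (by linarith : (0:ℝ) ≤ p - ξ₁) (by linarith : (0:ℝ) ≤ p - ξ₂))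
      (by linarith : (0:ℝ) ≤ ξ₃ - p)) (by linarith : (0:ℝ) ≤ ξ₄ - p)]
  have hq4 : q < ξ₄ := by
    by_contra h
    push_neg at h
    nlinarith [mul_nonneg (mul_nonneg (mul_nonneg
      (by linarith : (0:ℝ) ≤ q - ξ₁) (by linarith : (0:ℝ) ≤ q - ξ₂))
      (by linarith : (0:ℝ) ≤ q - ξ₃)) (by linarith : (0:ℝ) ≤ q - ξ₄)]
  linarith

/-- `F′(1/3) > 0` for the F-family with the given parameter constraints. -/
lemma Fder_pos_third (a b c : ℝ) (ha : 0 ≤ a) (hab : a ≤ b)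
    (hb1 : 1 / 6 ≤ b) (hb2 : b ≤ 1 / 4) (hc : 1 / 2 ≤ c) :
    0 < ((1/3:ℝ)-a)*(1/3-b)*(1/3-c)*(1/3-1) + (1/3)*(1/3-b)*(1/3-c)*(1/3-1)
      + (1/3)*(1/3-a)*(1/3-c)*(1/3-1) + (1/3)*(1/3-a)*(1/3-b)*(1/3-1)
      + (1/3)*(1/3-a)*(1/3-b)*(1/3-c) := by
  nlinarith [mul_nonneg (by linarith : (0:ℝ) ≤ c - 1/2)
      (by nlinarith : (0:ℝ) ≤ 3*(1/3-a)*(1/3-b) + 2*(1/3-a) + 2*(1/3-b)),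
    mul_nonneg (by linarith : (0:ℝ) ≤ 1/3-a) (by linarith : (0:ℝ) ≤ b - 1/6),
    mul_nonneg (mul_nonneg (by linarith : (0:ℝ) ≤ 1/3-a) (by linarith : (0:ℝ) ≤ 1/3-b))
      (by linarith : (0:ℝ) ≤ c - 1/3)]

/-- `F′(p) < 0` for `p = 62/100, 78/100` when `c ∈ [1/2, 3/4]`. -/
lemma Fder_neg_lo (a b c p : ℝ) (ha : 0 ≤ a) (hab : a ≤ b)
    (hb1 : 1 / 6 ≤ b) (hb2 : b ≤ 1 / 4) (hc : 1/2 ≤ c) (hcu : c ≤ 3/4)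
    (hp : p = 62/100 ∨ p = 78/100) :
    (p-a)*(p-b)*(p-c)*(p-1) + p*(p-b)*(p-c)*(p-1)
      + p*(p-a)*(p-c)*(p-1) + p*(p-a)*(p-b)*(p-1)
      + p*(p-a)*(p-b)*(p-c) < 0 := by
  rcases hp with hp | hp <;> subst hp <;>
  nlinarith [mul_nonneg ha (by linarith : (0:ℝ) ≤ c - 1/2),
    mul_nonneg (by linarith : (0:ℝ) ≤ b - 1/6) (by linarith : (0:ℝ) ≤ c - 1/2),
    mul_nonneg ha (by linarith : (0:ℝ) ≤ 3/4 - c),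
    mul_nonneg (by linarith : (0:ℝ) ≤ b - 1/6) (by linarith : (0:ℝ) ≤ 3/4 - c),
    mul_nonneg (by linarith : (0:ℝ) ≤ b - a) (by linarith : (0:ℝ) ≤ c - 1/2),
    mul_nonneg (mul_nonneg ha (by linarith : (0:ℝ) ≤ b - 1/6)) (by linarith : (0:ℝ) ≤ c - 1/2),
    mul_nonneg (mul_nonneg ha (by linarith : (0:ℝ) ≤ b - 1/6)) (by linarith : (0:ℝ) ≤ 3/4 - c),
    mul_nonneg ha (by linarith : (0:ℝ) ≤ b - 1/6), mul_nonneg ha (by linarith : (0:ℝ) ≤ 1/4 - b)]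

/-- `F′(p) < 0` for `p = 72/100, 87/100` when `c ∈ [3/4, 1]`. -/
lemma Fder_neg_hi (a b c p : ℝ) (ha : 0 ≤ a) (hab : a ≤ b)
    (hb1 : 1 / 6 ≤ b) (hb2 : b ≤ 1 / 4) (hc : 3/4 ≤ c) (hcu : c ≤ 1)
    (hp : p = 72/100 ∨ p = 87/100) :
    (p-a)*(p-b)*(p-c)*(p-1) + p*(p-b)*(p-c)*(p-1)
      + p*(p-a)*(p-c)*(p-1) + p*(p-a)*(p-b)*(p-1)
      + p*(p-a)*(p-b)*(p-c) < 0 := by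
  rcases hp with hp | hp <;> subst hp <;>
  nlinarith [mul_nonneg ha (by linarith : (0:ℝ) ≤ c - 3/4),
    mul_nonneg (by linarith : (0:ℝ) ≤ b - 1/6) (by linarith : (0:ℝ) ≤ c - 3/4),
    mul_nonneg ha (by linarith : (0:ℝ) ≤ 1 - c),
    mul_nonneg (by linarith : (0:ℝ) ≤ b - 1/6) (by linarith : (0:ℝ) ≤ 1 - c),
    mul_nonneg (by linarith : (0:ℝ) ≤ b - a) (by linarith : (0:ℝ) ≤ c - 3/4),
    mul_nonneg (mul_nonneg ha (by linarith : (0:ℝ) ≤ b - 1/6)) (by linarith : (0:ℝ) ≤ c - 3/4),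
    mul_nonneg (mul_nonneg ha (by linarith : (0:ℝ) ≤ b - 1/6)) (by linarith : (0:ℝ) ≤ 1 - c),
    mul_nonneg ha (by linarith : (0:ℝ) ≤ b - 1/6), mul_nonneg ha (by linarith : (0:ℝ) ≤ 1/4 - b)]

/-- For `F(x) = x(x-a)(x-b)(x-c)(x-1)` with `0 ≤ a ≤ b ≤ c ≤ 1`, `1/6 ≤ b ≤ 1/4` and
`c ≥ 1/2`, one has `ξ₄ - ξ₃ > z₂ - z₁`. -/
theorem F_family_xi4_sub_xi3_gt_z2z1
    (a b c : ℝ) (ha : 0 ≤ a) (hab : a ≤ b) (hbc : b ≤ c) (hc1 : c ≤ 1)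
    (hb1 : 1 / 6 ≤ b) (hb2 : b ≤ 1 / 4) (hc : 1 / 2 ≤ c)
    (ξ₁ ξ₂ ξ₃ ξ₄ : ℝ) (hξ12 : ξ₁ ≤ ξ₂) (hξ23 : ξ₂ ≤ ξ₃) (hξ34 : ξ₃ ≤ ξ₄)
    (hder : ∀ x : ℝ,
      deriv (fun t : ℝ => t * (t - a) * (t - b) * (t - c) * (t - 1)) x
        = 5 * (x - ξ₁) * (x - ξ₂) * (x - ξ₃) * (x - ξ₄))
    (z₁ z₂ z₃ z₄ : ℝ)
    (hz₁ : z₁ = a / 2) (hz₂ : z₂ = (a + b) / 2)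
    (hz₃ : z₃ = (b + c) / 2) (hz₄ : z₄ = (c + 1) / 2) :
    ξ₄ - ξ₃ > z₂ - z₁ := by
  have key : ∀ x : ℝ, (x-a)*(x-b)*(x-c)*(x-1) + x*(x-b)*(x-c)*(x-1) + x*(x-a)*(x-c)*(x-1)
        + x*(x-a)*(x-b)*(x-1) + x*(x-a)*(x-b)*(x-c)
        = 5 * (x - ξ₁) * (x - ξ₂) * (x - ξ₃) * (x - ξ₄) := by
    intro x
    have h := ((((hasDerivAt_id' (𝕜 := ℝ) (x := x)).mul
        ((hasDerivAt_id' (𝕜 := ℝ) (x := x)).sub_const a)).mul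
        ((hasDerivAt_id' (𝕜 := ℝ) (x := x)).sub_const b)).mul
        ((hasDerivAt_id' (𝕜 := ℝ) (x := x)).sub_const c)).mul
        ((hasDerivAt_id' (𝕜 := ℝ) (x := x)).sub_const 1)
    simp only [Pi.mul_apply] at h
    linear_combination hder x - h.deriv
  -- ξ₁ ≤ 1/3
  have hξ1 : ξ₁ ≤ 1/3 := by
    by_contra hcon
    push_neg at hcon
    rcases eq_or_lt_of_le ha with h0 | h0
    · -- a = 0 : F'(0) = 0
      have h00 : 5 * (0 - ξ₁) * (0 - ξ₂) * (0 - ξ₃) * (0 - ξ₄) = 0 := by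
        rw [← key 0, ← h0]; ring
      nlinarith [mul_pos (mul_pos (mul_pos
        (by linarith : (0:ℝ) < ξ₁ - 0) (by linarith : (0:ℝ) < ξ₂ - 0))
        (by linarith : (0:ℝ) < ξ₃ - 0)) (by linarith : (0:ℝ) < ξ₄ - 0)]
    · -- a > 0 : Rolle on [0, a]
      have hcont : ContinuousOn (fun t : ℝ => t * (t - a) * (t - b) * (t - c) * (t - 1))
          (Set.Icc 0 a) := by fun_prop
      have hfI : (fun t : ℝ => t * (t - a) * (t - b) * (t - c) * (t - 1)) 0
          = (fun t : ℝ => t * (t - a) * (t - b) * (t - c) * (t - 1)) a := by ring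
      obtain ⟨t, ht, hft⟩ := exists_deriv_eq_zero h0 hcont hfI
      have h5 : 5 * (t - ξ₁) * (t - ξ₂) * (t - ξ₃) * (t - ξ₄) = 0 := by
        rw [← hder t, hft]
      have ht2 : t < 1/3 := by
        have := ht.2
        linarith
      nlinarith [mul_pos (mul_pos (mul_pos
        (by linarith : (0:ℝ) < ξ₁ - t) (by linarith : (0:ℝ) < ξ₂ - t))
        (by linarith : (0:ℝ) < ξ₃ - t)) (by linarith : (0:ℝ) < ξ₄ - t)]
  -- F'(1/3) > 0
  have hr : 0 < 5 * (1/3 - ξ₁) * (1/3 - ξ₂) * (1/3 - ξ₃) * (1/3 - ξ₄) := by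
    rw [← key]
    exact Fder_pos_third a b c ha hab hb1 hb2 hc
  rw [hz₂, hz₁]
  rcases le_or_gt c (3/4) with hcc | hcc
  · -- c ∈ [1/2, 3/4] : use p = 0.62, q = 0.78
    have hp : 5 * (62/100 - ξ₁) * (62/100 - ξ₂) * (62/100 - ξ₃) * (62/100 - ξ₄) < 0 := by
      rw [← key]
      exact Fder_neg_lo a b c _ ha hab hb1 hb2 hc hcc (Or.inl rfl)
    have hq : 5 * (78/100 - ξ₁) * (78/100 - ξ₂) * (78/100 - ξ₃) * (78/100 - ξ₄) < 0 := by
      rw [← key]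
      exact Fder_neg_lo a b c _ ha hab hb1 hb2 hc hcc (Or.inr rfl)
    have := gap_aux ξ₁ ξ₂ ξ₃ ξ₄ (62/100) (78/100) hξ12 hξ23 hξ34 hξ1
      (by norm_num) (by norm_num) hr hp hq
    linarith
  · -- c ∈ (3/4, 1] : use p = 0.72, q = 0.87
    have hcc' : 3/4 ≤ c := le_of_lt hcc
    have hp : 5 * (72/100 - ξ₁) * (72/100 - ξ₂) * (72/100 - ξ₃) * (72/100 - ξ₄) < 0 := by
      rw [← key]
      exact Fder_neg_hi a b c _ ha hab hb1 hb2 hcc' hc1 (Or.inl rfl)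
    have hq : 5 * (87/100 - ξ₁) * (87/100 - ξ₂) * (87/100 - ξ₃) * (87/100 - ξ₄) < 0 := by
      rw [← key]
      exact Fder_neg_hi a b c _ ha hab hb1 hb2 hcc' hc1 (Or.inr rfl)
    have := gap_aux ξ₁ ξ₂ ξ₃ ξ₄ (72/100) (87/100) hξ12 hξ23 hξ34 hξ1
      (by norm_num) (by norm_num) hr hp hq
    linarith
end

section
/- Under the hypotheses of the F-family, if in addition 0.25 ≤ b ≤ 0.5 and 0.5 ≤ c ≤ 0.6 (with 0 ≤ a ≤ b), then the case R− holds, i.e. M̃ > M. (This combines the two cases b ∈ [0.25, 0.35] and b ∈ [0.35, 0.5].) -/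
private lemma FD_hasDerivAt (a b c x : ℝ) :
    HasDerivAt (fun t : ℝ => t * (t - a) * (t - b) * (t - c) * (t - 1))
      ((x-a)*(x-b)*(x-c)*(x-1) + x*(x-b)*(x-c)*(x-1) + x*(x-a)*(x-c)*(x-1)
        + x*(x-a)*(x-b)*(x-1) + x*(x-a)*(x-b)*(x-c)) x := by
  have h := (((((hasDerivAt_id x).mul ((hasDerivAt_id x).sub_const a)).mul
      ((hasDerivAt_id x).sub_const b)).mul ((hasDerivAt_id x).sub_const c)).mul
      ((hasDerivAt_id x).sub_const 1))
  exact h.congr_deriv (by simp only [Pi.mul_apply, id_eq]; ring)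

set_option maxHeartbeats 1000000

private lemma L1 (a b c : ℝ) (ha : 0 ≤ a) (hab : a ≤ b) (hb1 : 0.25 ≤ b) (hb2 : b ≤ 0.35)
    (hbc : b ≤ c) (hclo : 0.5 ≤ c) (hchi : c ≤ 0.6) (s : ℝ)
    (hs : s = 0.16+0.07*a+0.36*b+0.38*c) :
    ((s-a)*(s-b)*(s-c)*(s-1) + s*(s-b)*(s-c)*(s-1) + s*(s-a)*(s-c)*(s-1)
      + s*(s-a)*(s-b)*(s-1) + s*(s-a)*(s-b)*(s-c) : ℝ) < 0 := by
  subst hs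
  nlinarith [mul_nonneg ha (sub_nonneg.2 hab),
    mul_nonneg (sub_nonneg.2 hab) (sub_nonneg.2 hbc), mul_nonneg ha (sub_nonneg.2 hbc),
    mul_nonneg (sub_nonneg.2 hb1) (sub_nonneg.2 hb2),
    mul_nonneg (sub_nonneg.2 hclo) (sub_nonneg.2 hchi),
    mul_nonneg (mul_nonneg (sub_nonneg.2 hb1) (sub_nonneg.2 hb1)) (sub_nonneg.2 hb2),
    mul_nonneg (mul_nonneg (sub_nonneg.2 hclo) (sub_nonneg.2 hclo)) (sub_nonneg.2 hchi),
    mul_nonneg (mul_nonneg ha ha) (sub_nonneg.2 hab),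
    sq_nonneg (a-0.2), sq_nonneg (c-0.55), sq_nonneg (b-0.3)]

private lemma L2 (a b c : ℝ) (ha : 0 ≤ a) (hab : a ≤ b) (hb1 : 0.25 ≤ b) (hb2 : b ≤ 0.35)
    (hbc : b ≤ c) (hclo : 0.5 ≤ c) (hchi : c ≤ 0.6) (s : ℝ)
    (hs : s = 0.66+0.07*a-0.14*b+0.38*c) :
    ((s-a)*(s-b)*(s-c)*(s-1) + s*(s-b)*(s-c)*(s-1) + s*(s-a)*(s-c)*(s-1)
      + s*(s-a)*(s-b)*(s-1) + s*(s-a)*(s-b)*(s-c) : ℝ) < 0 := by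
  subst hs
  nlinarith [mul_nonneg ha (sub_nonneg.2 hab),
    mul_nonneg (sub_nonneg.2 hab) (sub_nonneg.2 hbc), mul_nonneg ha (sub_nonneg.2 hbc),
    mul_nonneg (sub_nonneg.2 hb1) (sub_nonneg.2 hb2),
    mul_nonneg (sub_nonneg.2 hclo) (sub_nonneg.2 hchi),
    mul_nonneg (mul_nonneg (sub_nonneg.2 hb1) (sub_nonneg.2 hb1)) (sub_nonneg.2 hb2),
    mul_nonneg (mul_nonneg (sub_nonneg.2 hclo) (sub_nonneg.2 hclo)) (sub_nonneg.2 hchi),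
    mul_nonneg (mul_nonneg ha ha) (sub_nonneg.2 hab),
    sq_nonneg (a-0.2), sq_nonneg (c-0.55), sq_nonneg (b-0.3)]

private lemma L3 (a b c : ℝ) (ha : 0 ≤ a) (hab : a ≤ b) (hb1 : 0.35 ≤ b) (hb2 : b ≤ 0.5)
    (hbc : b ≤ c) (hclo : 0.5 ≤ c) (hchi : c ≤ 0.6) (s : ℝ)
    (hs : s = 0.16+0.06*a+0.41*b+0.37*c) :
    ((s-a)*(s-b)*(s-c)*(s-1) + s*(s-b)*(s-c)*(s-1) + s*(s-a)*(s-c)*(s-1)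
      + s*(s-a)*(s-b)*(s-1) + s*(s-a)*(s-b)*(s-c) : ℝ) < 0 := by
  subst hs
  nlinarith [mul_nonneg ha (sub_nonneg.2 hab),
    mul_nonneg (sub_nonneg.2 hab) (sub_nonneg.2 hbc), mul_nonneg ha (sub_nonneg.2 hbc),
    mul_nonneg (sub_nonneg.2 hb1) (sub_nonneg.2 hb2),
    mul_nonneg (sub_nonneg.2 hclo) (sub_nonneg.2 hchi),
    mul_nonneg (mul_nonneg (sub_nonneg.2 hb1) (sub_nonneg.2 hb1)) (sub_nonneg.2 hb2),
    mul_nonneg (mul_nonneg (sub_nonneg.2 hclo) (sub_nonneg.2 hclo)) (sub_nonneg.2 hchi),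
    mul_nonneg (mul_nonneg ha ha) (sub_nonneg.2 hab),
    sq_nonneg (a-0.2), sq_nonneg (c-0.55), sq_nonneg (b-0.42)]

private lemma L4 (a b c : ℝ) (ha : 0 ≤ a) (hab : a ≤ b) (hb1 : 0.35 ≤ b) (hb2 : b ≤ 0.5)
    (hbc : b ≤ c) (hclo : 0.5 ≤ c) (hchi : c ≤ 0.6) (s : ℝ)
    (hs : s = 0.66+0.06*a-0.09*b+0.37*c) :
    ((s-a)*(s-b)*(s-c)*(s-1) + s*(s-b)*(s-c)*(s-1) + s*(s-a)*(s-c)*(s-1)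
      + s*(s-a)*(s-b)*(s-1) + s*(s-a)*(s-b)*(s-c) : ℝ) < 0 := by
  subst hs
  nlinarith [mul_nonneg ha (sub_nonneg.2 hab),
    mul_nonneg (sub_nonneg.2 hab) (sub_nonneg.2 hbc), mul_nonneg ha (sub_nonneg.2 hbc),
    mul_nonneg (sub_nonneg.2 hb1) (sub_nonneg.2 hb2),
    mul_nonneg (sub_nonneg.2 hclo) (sub_nonneg.2 hchi),
    mul_nonneg (mul_nonneg (sub_nonneg.2 hb1) (sub_nonneg.2 hb1)) (sub_nonneg.2 hb2),
    mul_nonneg (mul_nonneg (sub_nonneg.2 hclo) (sub_nonneg.2 hclo)) (sub_nonneg.2 hchi),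
    mul_nonneg (mul_nonneg ha ha) (sub_nonneg.2 hab),
    sq_nonneg (a-0.2), sq_nonneg (c-0.55), sq_nonneg (b-0.42)]

private lemma L5 (a b c : ℝ) (ha : 0 ≤ a) (hab : a ≤ b) (hb1 : 0.25 ≤ b) (hb2 : b ≤ 0.5)
    (hbc : b ≤ c) (hclo : 0.5 ≤ c) (hchi : c ≤ 0.6) (s : ℝ)
    (hs : s = 0.35+0.25*a+0.26*b+0.16*c) :
    ((s-a)*(s-b)*(s-c)*(s-1) + s*(s-b)*(s-c)*(s-1) + s*(s-a)*(s-c)*(s-1)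
      + s*(s-a)*(s-b)*(s-1) + s*(s-a)*(s-b)*(s-c) : ℝ) < 0 := by
  subst hs
  nlinarith [mul_nonneg ha (sub_nonneg.2 hab),
    mul_nonneg (sub_nonneg.2 hab) (sub_nonneg.2 hbc), mul_nonneg ha (sub_nonneg.2 hbc),
    mul_nonneg (sub_nonneg.2 hb1) (sub_nonneg.2 hb2),
    mul_nonneg (sub_nonneg.2 hclo) (sub_nonneg.2 hchi),
    mul_nonneg (mul_nonneg (sub_nonneg.2 hb1) (sub_nonneg.2 hb1)) (sub_nonneg.2 hb2),
    mul_nonneg (mul_nonneg (sub_nonneg.2 hclo) (sub_nonneg.2 hclo)) (sub_nonneg.2 hchi),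
    mul_nonneg (mul_nonneg ha ha) (sub_nonneg.2 hab),
    sq_nonneg (a-0.2), sq_nonneg (c-0.55), sq_nonneg (b-0.37)]

private lemma L6 (a b c : ℝ) (ha : 0 ≤ a) (hab : a ≤ b) (hb1 : 0.25 ≤ b) (hb2 : b ≤ 0.5)
    (hbc : b ≤ c) (hclo : 0.5 ≤ c) (hchi : c ≤ 0.6) (s : ℝ)
    (hs : s = 0.35-0.25*a+0.26*b+0.66*c) :
    ((s-a)*(s-b)*(s-c)*(s-1) + s*(s-b)*(s-c)*(s-1) + s*(s-a)*(s-c)*(s-1)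
      + s*(s-a)*(s-b)*(s-1) + s*(s-a)*(s-b)*(s-c) : ℝ) < 0 := by
  subst hs
  nlinarith [mul_nonneg ha (sub_nonneg.2 hab),
    mul_nonneg (sub_nonneg.2 hab) (sub_nonneg.2 hbc), mul_nonneg ha (sub_nonneg.2 hbc),
    mul_nonneg (sub_nonneg.2 hb1) (sub_nonneg.2 hb2),
    mul_nonneg (sub_nonneg.2 hclo) (sub_nonneg.2 hchi),
    mul_nonneg (mul_nonneg (sub_nonneg.2 hb1) (sub_nonneg.2 hb1)) (sub_nonneg.2 hb2),
    mul_nonneg (mul_nonneg (sub_nonneg.2 hclo) (sub_nonneg.2 hclo)) (sub_nonneg.2 hchi),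
    mul_nonneg (mul_nonneg ha ha) (sub_nonneg.2 hab),
    sq_nonneg (a-0.2), sq_nonneg (c-0.55), sq_nonneg (b-0.37)]

set_option maxHeartbeats 1000000 in
/-- For `F(x) = x(x-a)(x-b)(x-c)(x-1)` with `0 ≤ a ≤ b ≤ c ≤ 1`, `0.25 ≤ b ≤ 0.5` and
`0.5 ≤ c ≤ 0.6`, the case R− holds: `M̃ > M`. -/
theorem F_family_S5_S6_Rminus
    (a b c : ℝ) (ha : 0 ≤ a) (hab : a ≤ b) (hbc : b ≤ c) (hc1 : c ≤ 1)
    (hb1 : 0.25 ≤ b) (hb2 : b ≤ 0.5) (hclo : 0.5 ≤ c) (hchi : c ≤ 0.6)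
    (ξ₁ ξ₂ ξ₃ ξ₄ : ℝ) (hξ12 : ξ₁ ≤ ξ₂) (hξ23 : ξ₂ ≤ ξ₃) (hξ34 : ξ₃ ≤ ξ₄)
    (hder : ∀ x : ℝ,
      deriv (fun t : ℝ => t * (t - a) * (t - b) * (t - c) * (t - 1)) x
        = 5 * (x - ξ₁) * (x - ξ₂) * (x - ξ₃) * (x - ξ₄))
    (z₁ z₂ z₃ z₄ M Mt : ℝ)
    (hz₁ : z₁ = a / 2) (hz₂ : z₂ = (a + b) / 2)
    (hz₃ : z₃ = (b + c) / 2) (hz₄ : z₄ = (c + 1) / 2)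
    (hM : M = max (max (z₂ - z₁) (z₃ - z₂)) (z₄ - z₃))
    (hMt : Mt = max (max (ξ₂ - ξ₁) (ξ₃ - ξ₂)) (ξ₄ - ξ₃)) :
    Mt > M := by
  have key : ∀ x : ℝ, ((x-a)*(x-b)*(x-c)*(x-1) + x*(x-b)*(x-c)*(x-1) + x*(x-a)*(x-c)*(x-1)
      + x*(x-a)*(x-b)*(x-1) + x*(x-a)*(x-b)*(x-c) : ℝ)
      = 5 * (x - ξ₁) * (x - ξ₂) * (x - ξ₃) * (x - ξ₄) := fun x =>
    ((FD_hasDerivAt a b c x).deriv).symm.trans (hder x)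
  -- ξ₁ ≤ a
  have h1a : ξ₁ ≤ a := by
    by_contra h; push_neg at h
    have k := key a
    have hp : 0 < ((ξ₁-a)*(ξ₂-a))*((ξ₃-a)*(ξ₄-a)) :=
      mul_pos (mul_pos (by linarith) (by linarith)) (mul_pos (by linarith) (by linarith))
    have hq : 0 ≤ (a*((b-a)*(c-a)))*(1-a) :=
      mul_nonneg (mul_nonneg ha (mul_nonneg (by linarith) (by linarith))) (by linarith)
    nlinarith [k, hp, hq]
  -- c ≤ ξ₄
  have h4c : c ≤ ξ₄ := by
    by_contra h; push_neg at h
    have k := key c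
    have hp : 0 < ((c-ξ₁)*(c-ξ₂))*((c-ξ₃)*(c-ξ₄)) :=
      mul_pos (mul_pos (by linarith) (by linarith)) (mul_pos (by linarith) (by linarith))
    have hq : 0 ≤ (c*((c-a)*(c-b)))*(1-c) :=
      mul_nonneg (mul_nonneg (by linarith) (mul_nonneg (by linarith) (by linarith))) (by linarith)
    nlinarith [k, hp, hq]
  -- ξ₂ ≤ b
  have h2b : ξ₂ ≤ b := by
    by_contra h; push_neg at h
    have k := key b
    have hDb : 0 ≤ b*((b-a)*((c-b)*(1-b))) :=
      mul_nonneg (by linarith) (mul_nonneg (by linarith)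
        (mul_nonneg (by linarith) (by linarith)))
    have p23 : 0 < (ξ₂-b)*(ξ₃-b) := mul_pos (by linarith) (by linarith)
    have h1b : 0 ≤ b - ξ₁ := by linarith
    have h4b : 0 ≤ ξ₄ - b := by linarith
    have hq0 : (b-ξ₁)*(ξ₄-b) = 0 := by
      by_contra hne
      have hqpos : 0 < (b-ξ₁)*(ξ₄-b) :=
        lt_of_le_of_ne (mul_nonneg h1b h4b) (Ne.symm hne)
      nlinarith [k, hDb, mul_pos hqpos p23]
    rcases mul_eq_zero.mp hq0 with h0 | h0
    · have hx1 : ξ₁ = b := by linarith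
      have hax : a = b := le_antisymm hab (by linarith)
      have k0 := key 0
      have hb0 : (0:ℝ) < b := by linarith
      have hc0 : (0:ℝ) < c := by linarith
      have s1 : b*b*c < ξ₂*ξ₃*ξ₄ := by
        nlinarith [mul_pos (mul_pos (show (0:ℝ) < ξ₃ by linarith) (show (0:ℝ) < ξ₄ by linarith))
            (show (0:ℝ) < ξ₂ - b by linarith),
          mul_pos (mul_pos hb0 (show (0:ℝ) < ξ₄ by linarith))
            (show (0:ℝ) < ξ₃ - b by linarith),
          mul_nonneg (mul_nonneg hb0.le hb0.le) (show (0:ℝ) ≤ ξ₄ - c by linarith)]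
      have s2 : b*(b*b*c) < b*(ξ₂*ξ₃*ξ₄) := by
        exact mul_lt_mul_of_pos_left s1 hb0
      rw [hax] at k0
      rw [hx1] at k0
      nlinarith [k0, s2, mul_pos (mul_pos hb0 hb0) hc0]
    · linarith
  -- location of ξ₃, ξ₄ from a negative test value
  have crit : ∀ u : ℝ, b ≤ u →
      ((u-a)*(u-b)*(u-c)*(u-1) + u*(u-b)*(u-c)*(u-1) + u*(u-a)*(u-c)*(u-1)
        + u*(u-a)*(u-b)*(u-1) + u*(u-a)*(u-b)*(u-c) : ℝ) < 0 → ξ₃ < u ∧ u < ξ₄ := by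
    intro u hub hDu
    have k := key u
    have h12 : 0 ≤ (u-ξ₁)*(u-ξ₂) := mul_nonneg (by linarith) (by linarith)
    constructor
    · by_contra hc3; push_neg at hc3
      have h34 : 0 ≤ (ξ₃-u)*(ξ₄-u) := mul_nonneg (by linarith) (by linarith)
      nlinarith [k, mul_nonneg h12 h34, hDu]
    · by_contra hc4; push_neg at hc4
      have h34 : 0 ≤ (u-ξ₃)*(u-ξ₄) := mul_nonneg (by linarith) (by linarith)
      nlinarith [k, mul_nonneg h12 h34, hDu]
  -- obligation A : (1-b)/2 < ξ₄ - ξ₃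
  have hA : (1-b)/2 < ξ₄ - ξ₃ := by
    rcases le_or_gt b 0.35 with hbb | hbb
    · obtain ⟨hs3, -⟩ := crit (0.16+0.07*a+0.36*b+0.38*c) (by linarith)
        (L1 a b c ha hab hb1 hbb hbc hclo hchi _ rfl)
      obtain ⟨-, ht4⟩ := crit (0.66+0.07*a-0.14*b+0.38*c) (by linarith)
        (L2 a b c ha hab hb1 hbb hbc hclo hchi _ rfl)
      linarith
    · obtain ⟨hs3, -⟩ := crit (0.16+0.06*a+0.41*b+0.37*c) (by linarith)
        (L3 a b c ha hab hbb.le hb2 hbc hclo hchi _ rfl)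
      obtain ⟨-, ht4⟩ := crit (0.66+0.06*a-0.09*b+0.37*c) (by linarith)
        (L4 a b c ha hab hbb.le hb2 hbc hclo hchi _ rfl)
      linarith
  -- obligation B : (c-a)/2 < ξ₄ - ξ₃
  have hB : (c-a)/2 < ξ₄ - ξ₃ := by
    obtain ⟨hs3, -⟩ := crit (0.35+0.25*a+0.26*b+0.16*c) (by linarith)
      (L5 a b c ha hab hb1 hb2 hbc hclo hchi _ rfl)
    obtain ⟨-, ht4⟩ := crit (0.35-0.25*a+0.26*b+0.66*c) (by linarith)
      (L6 a b c ha hab hb1 hb2 hbc hclo hchi _ rfl)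
    linarith
  have hMt4 : ξ₄ - ξ₃ ≤ Mt := by rw [hMt]; exact le_max_right _ _
  rw [hM, hz₁, hz₂, hz₃, hz₄]
  exact max_lt (max_lt (by linarith) (by linarith)) (by linarith)
end
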